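/- Let n ≥ 4 be a natural number and R > 0 a real number, and set a := −R/√(4n−6) and b := √2 R/√(2n−3). Then a ≠ 0, b ≠ 0, and the following hold: (i) 2a² + (n−2)b² = R²; (ii) 2a² + 5ab + 2b² = 0; (iii) a³ + a b² + 2b³ ≠ 0; (iv) 2b − a ≠ 0. -/

import Mathlib

open Real

/-- the algebraic relations satisfied by `a := −R/√(4n−6)` and
`b := √2 R/√(2n−3)` for `n ≥ 4` and `R > 0`, used in the Lorenz-96 Lie bracket
spanning argument. -/
theorem lorenz_spanning_point_relations
    (n : ℕ) (hn : 4 ≤ n) (R : ℝ) (hR : 0 < R) :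
    let a : ℝ := -R / Real.sqrt (4 * (n : ℝ) - 6)
    let b : ℝ := Real.sqrt 2 * R / Real.sqrt (2 * (n : ℝ) - 3)
    a ≠ 0 ∧ b ≠ 0 ∧
    2 * a ^ 2 + ((n : ℝ) - 2) * b ^ 2 = R ^ 2 ∧
    2 * a ^ 2 + 5 * a * b + 2 * b ^ 2 = 0 ∧
    a ^ 3 + a * b ^ 2 + 2 * b ^ 3 ≠ 0 ∧
    2 * b - a ≠ 0 := by
  intro a b
  have hn4 : (4 : ℝ) ≤ (n : ℝ) := by exact_mod_cast hn
  have hc : (0 : ℝ) < 4 * (n : ℝ) - 6 := by linarith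
  have hd : (0 : ℝ) < 2 * (n : ℝ) - 3 := by linarith
  have hsc : 0 < Real.sqrt (4 * (n : ℝ) - 6) := Real.sqrt_pos.mpr hc
  have ha : a ≠ 0 := by
    have : a = -(R / Real.sqrt (4 * (n : ℝ) - 6)) := by ring
    rw [this]
    exact neg_ne_zero.mpr (ne_of_gt (div_pos hR hsc))
  -- b = -2a
  have hsplit : Real.sqrt (4 * (n : ℝ) - 6) = Real.sqrt 2 * Real.sqrt (2 * (n : ℝ) - 3) := by
    rw [← Real.sqrt_mul (by norm_num : (0:ℝ) ≤ 2)]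
    ring_nf
  have hs2 : (0:ℝ) < Real.sqrt 2 := Real.sqrt_pos.mpr (by norm_num)
  have hsd : 0 < Real.sqrt (2 * (n : ℝ) - 3) := Real.sqrt_pos.mpr hd
  have hb : b = -2 * a := by
    show Real.sqrt 2 * R / Real.sqrt (2 * (n : ℝ) - 3)
        = -2 * (-R / Real.sqrt (4 * (n : ℝ) - 6))
    rw [hsplit]
    have h2 : Real.sqrt 2 * Real.sqrt 2 = 2 := Real.mul_self_sqrt (by norm_num)
    field_simp
    linear_combination h2
  have ha2 : a ^ 2 = R ^ 2 / (4 * (n : ℝ) - 6) := by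
    show (-R / Real.sqrt (4 * (n : ℝ) - 6)) ^ 2 = _
    rw [div_pow, neg_pow]
    rw [Real.sq_sqrt (le_of_lt hc)]
    ring
  refine ⟨ha, by rw [hb]; simpa using ha, ?_, by rw [hb]; ring, ?_, ?_⟩
  · have key : (4 * (n : ℝ) - 6) * a ^ 2 = R ^ 2 := by
      rw [ha2]; field_simp
    rw [hb]; linear_combination key
  · rw [hb]
    intro h
    apply ha
    have h3 : a ^ 3 = 0 := by linear_combination (-1/11 : ℝ) * h
    exact pow_eq_zero_iff (by norm_num) |>.mp h3
  · rw [hb]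
    intro h
    apply ha
    linarith
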